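/- Let r ≥ 2 and c be integers with the same parity and |c| ≤ r - 2, and write |c| = r - 2k. If 0 ≤ c ≤ r-2, the set of nonnegative integers x such that d_pc(O,(x,x+c)) = r is the integer interval [ (r-1-k)(r-2-k)/2 + k , (r-k)(r-k-1)/2 + k ]; if -(r-2) ≤ c < 0, it is the integer interval [ (r-k)(r-k-1)/2 + 1 , (r-k+1)(r-k)/2 ]. -/

import Mathlib

def Lp : ℤ × ℤ → ℤ × ℤ := fun p => (-p.1 + 2*p.2 + 1, p.2)
def Lpp : ℤ × ℤ → ℤ × ℤ := fun p => (p.1, 2*p.1 - p.2 + 1)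
def Mr : ℤ × ℤ → ℤ × ℤ := fun p => (p.1 + 1, p.2)
def Ml : ℤ × ℤ → ℤ × ℤ := fun p => (p.1 - 1, p.2)
def Mu : ℤ × ℤ → ℤ × ℤ := fun p => (p.1, p.2 + 1)
def Md : ℤ × ℤ → ℤ × ℤ := fun p => (p.1, p.2 - 1)

def ops : Set ((ℤ × ℤ) → (ℤ × ℤ)) := {Lp, Lpp, Mr, Ml, Mu, Md}

/-- The parabolic-taxicab distance: minimal number of operators from `ops`
needed to map `P` to `Q`. -/
noncomputable def dpc (P Q : ℤ × ℤ) : ℕ :=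
  sInf {n | ∃ l : List ((ℤ × ℤ) → (ℤ × ℤ)), l.length = n ∧ (∀ f ∈ l, f ∈ ops) ∧
    l.foldr (fun f p => f p) P = Q}

namespace PCaux

def T (t : ℤ) : ℤ := t * (t - 1) / 2

lemma two_T (t : ℤ) : 2 * T t = t * (t - 1) := by
  have h : (2:ℤ) ∣ t * (t - 1) := by
    rcases Int.even_or_odd t with h | h
    · exact Dvd.dvd.mul_right h.two_dvd _
    · have : Even (t - 1) := by rcases h with ⟨m, hm⟩; exact ⟨m, by omega⟩
      exact Dvd.dvd.mul_left this.two_dvd _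
  rw [T, Int.mul_ediv_cancel' h]

lemma T_succ (t : ℤ) : T (t + 1) = T t + t := by
  have h1 := two_T t
  have h2 := two_T (t + 1)
  nlinarith [h1, h2]

lemma T_nonneg {t : ℤ} (h : 0 ≤ t) : 0 ≤ T t := by
  rcases h.eq_or_lt with rfl | h'
  · simp [T]
  · have h1 : (1:ℤ) ≤ t := h'
    have := mul_nonneg (by linarith : (0:ℤ) ≤ t) (by linarith : (0:ℤ) ≤ t - 1)
    linarith [two_T t]

lemma T_mono {s t : ℤ} (hs : 0 ≤ s) (h : s ≤ t) : T s ≤ T t := by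
  rcases hs.eq_or_lt with rfl | hs'
  · simpa [T] using T_nonneg (by linarith : (0:ℤ) ≤ t)
  · have h1 : (1:ℤ) ≤ s := hs'
    have := mul_le_mul h (by linarith : s - 1 ≤ t - 1) (by linarith) (by linarith : (0:ℤ) ≤ t)
    linarith [two_T s, two_T t]

def G (a b : ℤ) : ℤ := T (max a b) + a

lemma G_mono_a {a b : ℤ} (ha : 0 ≤ a) (hb : 0 ≤ b) : G a b + 1 ≤ G (a+1) b := by
  have h0 : (0:ℤ) ≤ max a b := le_max_of_le_left ha
  have h1 : max a b ≤ max (a+1) b := max_le_max (by linarith) (le_refl b)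
  have h2 := T_mono h0 h1
  simp only [G]; linarith

lemma G_mono_b {a b : ℤ} (ha : 0 ≤ a) (hb : 0 ≤ b) : G a b ≤ G a (b+1) := by
  have h0 : (0:ℤ) ≤ max a b := le_max_of_le_left ha
  have h1 : max a b ≤ max a (b+1) := max_le_max (le_refl a) (by linarith)
  have h2 := T_mono h0 h1
  simp only [G]; linarith

lemma G_Lp {a b : ℤ} (ha : 0 ≤ a) (hb : 0 ≤ b) :
    G a b - 2*(a-b) + 1 ≤ G (b+1) a := by
  simp only [G]
  rcases le_total a b with h | h
  · rw [max_eq_right h, max_eq_left (by linarith : a ≤ b + 1), T_succ]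
    linarith
  · rw [max_eq_left h]
    rcases le_total (b+1) a with h2 | h2
    · rw [max_eq_right h2]; linarith
    · rw [max_eq_left h2, T_succ]
      have := T_mono ha h2
      linarith [T_succ b]

lemma G_Lpp {a b : ℤ} (ha : 0 ≤ a) (hb : 0 ≤ b) : G a b ≤ G b (a+1) := by
  simp only [G]
  rcases le_total a b with h | h
  · rw [max_eq_right h]
    have := T_mono (by linarith : (0:ℤ) ≤ b) (le_max_left b (a+1))
    linarith
  · rw [max_eq_left h, max_eq_right (by linarith : b ≤ a + 1), T_succ]
    linarith

/-- Lower bound invariant: any word of length n ends at a point with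
    x - y = a - b, a+b = n, a,b ≥ 0, and x ≤ G a b. -/
lemma lb : ∀ l : List ((ℤ × ℤ) → (ℤ × ℤ)), (∀ f ∈ l, f ∈ ops) →
    ∃ a b : ℤ, 0 ≤ a ∧ 0 ≤ b ∧ a + b = l.length ∧
      (l.foldr (fun f p => f p) ((0,0) : ℤ × ℤ)).1 -
        (l.foldr (fun f p => f p) ((0,0) : ℤ × ℤ)).2 = a - b ∧
      (l.foldr (fun f p => f p) ((0,0) : ℤ × ℤ)).1 ≤ G a b := by
  intro l
  induction l with
  | nil =>
    intro _
    exact ⟨0, 0, le_refl 0, le_refl 0, by simp, by simp, by norm_num [G, T]⟩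
  | cons f l ih =>
    intro h
    obtain ⟨a, b, ha, hb, hn, hu, hx⟩ := ih (fun g hg => h g (List.mem_cons_of_mem _ hg))
    have hf := h f List.mem_cons_self
    simp only [List.foldr_cons, List.length_cons]
    set q := l.foldr (fun f p => f p) ((0,0) : ℤ × ℤ) with hq
    simp only [ops, Set.mem_insert_iff, Set.mem_singleton_iff] at hf
    rcases hf with rfl | rfl | rfl | rfl | rfl | rfl
    · -- Lp
      refine ⟨b+1, a, by linarith, ha, by push_cast; linarith, ?_, ?_⟩
      · simp only [Lp]; linarith
      · simp only [Lp]
        have := G_Lp ha hb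
        linarith
    · -- Lpp
      refine ⟨b, a+1, hb, by linarith, by push_cast; linarith, ?_, ?_⟩
      · simp only [Lpp]; linarith
      · simp only [Lpp]
        have := G_Lpp ha hb
        linarith
    · -- Mr
      refine ⟨a+1, b, by linarith, hb, by push_cast; linarith, ?_, ?_⟩
      · simp only [Mr]; linarith
      · simp only [Mr]
        have := G_mono_a ha hb
        linarith
    · -- Ml
      refine ⟨a, b+1, ha, by linarith, by push_cast; linarith, ?_, ?_⟩
      · simp only [Ml]; linarith
      · simp only [Ml]
        have := G_mono_b ha hb
        linarith
    · -- Mu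
      refine ⟨a, b+1, ha, by linarith, by push_cast; linarith, ?_, ?_⟩
      · simp only [Mu]; linarith
      · simp only [Mu]
        have := G_mono_b ha hb
        linarith
    · -- Md
      refine ⟨a+1, b, by linarith, hb, by push_cast; linarith, ?_, ?_⟩
      · simp only [Md]; linarith
      · simp only [Md]
        have := G_mono_a ha hb
        linarith

lemma mem_ops_Lp : Lp ∈ ops := by simp [ops]
lemma mem_ops_Lpp : Lpp ∈ ops := by simp [ops]
lemma mem_ops_Mr : Mr ∈ ops := by simp [ops]
lemma mem_ops_Mu : Mu ∈ ops := by simp [ops]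
lemma mem_ops_Md : Md ∈ ops := by simp [ops]

/-- Upper bound: every x with 0 ≤ x ≤ G a b is reachable in exactly a+b steps
    with x - y = a - b. -/
lemma ub (n : ℕ) : ∀ a b x : ℤ, 0 ≤ a → 0 ≤ b → a + b = n → 0 ≤ x → x ≤ G a b →
    ∃ l : List ((ℤ × ℤ) → (ℤ × ℤ)), l.length = n ∧ (∀ f ∈ l, f ∈ ops) ∧
      l.foldr (fun f p => f p) ((0,0) : ℤ × ℤ) = (x, x - a + b) := by
  induction n with
  | zero =>
    intro a b x ha hb hab hx hxG
    have ha0 : a = 0 := by omega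
    have hb0 : b = 0 := by omega
    subst ha0; subst hb0
    have : x = 0 := by
      have : G 0 0 = 0 := by norm_num [G, T]
      omega
    subst this
    exact ⟨[], rfl, by simp, by simp⟩
  | succ n ih =>
    intro a b x ha hb hab hx hxG
    have hab' : a + b = (n : ℤ) + 1 := by push_cast at hab; linarith
    rcases le_or_gt a b with hob | hob
    · -- a ≤ b, hence b ≥ 1
      have hb1 : 1 ≤ b := by omega
      rcases eq_or_lt_of_le ha with ha0 | ha1
      · -- a = 0
        have ha0' : a = 0 := ha0.symm
        subst ha0'
        rcases le_or_gt x (G 0 (b-1)) with hx1 | hx1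
        · -- Mu predecessor
          obtain ⟨l, hl, hops, hfold⟩ := ih 0 (b-1) x le_rfl (by omega) (by omega) hx hx1
          refine ⟨Mu :: l, by simp [hl], ?_, ?_⟩
          · intro g hg
            rcases List.mem_cons.mp hg with rfl | hg
            · exact mem_ops_Mu
            · exact hops g hg
          · rw [List.foldr_cons, hfold]
            simp only [Mu, Prod.mk.injEq]
            exact ⟨trivial, by ring⟩
        · -- Lpp predecessor at level (b-1, 0)
          have hx2 : x ≤ G (b-1) 0 := by
            have hG : G 0 b = T (b-1) + (b-1) := by
              have : max (0:ℤ) b = b := max_eq_right hb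
              simp only [G, this]
              have : b = (b-1) + 1 := by ring
              rw [this, T_succ]; ring
            have hG2 : G (b-1) 0 = T (b-1) + (b-1) := by
              have : max (b-1) (0:ℤ) = b - 1 := max_eq_left (by omega)
              simp only [G, this]
            simp only [G, max_eq_right hb] at hxG
            rw [hG2]
            have h := T_succ (b-1)
            rw [sub_add_cancel] at h
            linarith
          obtain ⟨l, hl, hops, hfold⟩ := ih (b-1) 0 x (by omega) le_rfl (by omega) hx hx2
          refine ⟨Lpp :: l, by simp [hl], ?_, ?_⟩
          · intro g hg
            rcases List.mem_cons.mp hg with rfl | hg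
            · exact mem_ops_Lpp
            · exact hops g hg
          · rw [List.foldr_cons, hfold]
            simp only [Lpp, Prod.mk.injEq]
            exact ⟨trivial, by ring⟩
      · -- a ≥ 1, a ≤ b
        have hmax : max a b = b := max_eq_right hob
        have hmax' : max (a-1) b = b := max_eq_right (by omega)
        rcases le_or_gt x (G (a-1) b) with hx1 | hx1
        · -- Md predecessor
          obtain ⟨l, hl, hops, hfold⟩ := ih (a-1) b x (by omega) hb (by omega) hx hx1
          refine ⟨Md :: l, by simp [hl], ?_, ?_⟩
          · intro g hg
            rcases List.mem_cons.mp hg with rfl | hg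
            · exact mem_ops_Md
            · exact hops g hg
          · rw [List.foldr_cons, hfold]
            simp only [Md, Prod.mk.injEq]
            exact ⟨trivial, by ring⟩
        · -- Mr predecessor: here x = G a b
          have hGeq : G (a-1) b = G a b - 1 := by simp only [G, hmax, hmax']; ring
          have hx0 : 1 ≤ x := by
            have h1 : 0 ≤ T b := T_nonneg (by omega)
            have h2 : 0 ≤ G (a-1) b := by simp only [G, hmax']; omega
            omega
          obtain ⟨l, hl, hops, hfold⟩ := ih (a-1) b (x-1) (by omega) hb (by omega)
            (by omega) (by omega)
          refine ⟨Mr :: l, by simp [hl], ?_, ?_⟩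
          · intro g hg
            rcases List.mem_cons.mp hg with rfl | hg
            · exact mem_ops_Mr
            · exact hops g hg
          · rw [List.foldr_cons, hfold]
            simp only [Mr, Prod.mk.injEq]
            constructor <;> ring
    · -- b < a
      rcases le_or_gt 1 b with hb1 | hb1
      · -- Mu predecessor, G a (b-1) = G a b
        have hx1 : x ≤ G a (b-1) := by
          have h1 : max a b = a := max_eq_left (by omega)
          have h2 : max a (b-1) = a := max_eq_left (by omega)
          simp only [G, h1] at hxG
          simp only [G, h2]
          exact hxG
        obtain ⟨l, hl, hops, hfold⟩ := ih a (b-1) x ha (by omega) (by omega) hx hx1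
        refine ⟨Mu :: l, by simp [hl], ?_, ?_⟩
        · intro g hg
          rcases List.mem_cons.mp hg with rfl | hg
          · exact mem_ops_Mu
          · exact hops g hg
        · rw [List.foldr_cons, hfold]
          simp only [Mu, Prod.mk.injEq]
          exact ⟨trivial, by ring⟩
      · -- b = 0
        have hb0 : b = 0 := by omega
        subst hb0
        have ha1 : 1 ≤ a := by omega
        have hmaxa : max a (0:ℤ) = a := max_eq_left ha
        have hmaxa' : max (a-1) (0:ℤ) = a - 1 := max_eq_left (by omega)
        have hTa : T a = T (a-1) + (a-1) := by
          have h := T_succ (a-1)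
          rw [sub_add_cancel] at h
          linarith
        rcases le_or_gt x (G (a-1) 0) with hx1 | hx1
        · -- Md predecessor
          obtain ⟨l, hl, hops, hfold⟩ := ih (a-1) 0 x (by omega) le_rfl (by omega) hx hx1
          refine ⟨Md :: l, by simp [hl], ?_, ?_⟩
          · intro g hg
            rcases List.mem_cons.mp hg with rfl | hg
            · exact mem_ops_Md
            · exact hops g hg
          · rw [List.foldr_cons, hfold]
            simp only [Md, Prod.mk.injEq]
            exact ⟨trivial, by ring⟩
        · rcases le_or_gt x (G (a-1) 0 + 1) with hx2 | hx2
          · -- Mr predecessor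
            have hx0 : 1 ≤ x := by
              have h1 : 0 ≤ T (a-1) := T_nonneg (by omega)
              simp only [G, hmaxa'] at hx1
              omega
            obtain ⟨l, hl, hops, hfold⟩ := ih (a-1) 0 (x-1) (by omega) le_rfl (by omega)
              (by omega) (by omega)
            refine ⟨Mr :: l, by simp [hl], ?_, ?_⟩
            · intro g hg
              rcases List.mem_cons.mp hg with rfl | hg
              · exact mem_ops_Mr
              · exact hops g hg
            · rw [List.foldr_cons, hfold]
              simp only [Mr, Prod.mk.injEq]
              constructor <;> ring
          · -- Lp predecessor at level (0, a-1), x₀ = x - 2a + 1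
            have hquad : 0 ≤ (a-2) * (a-3) := by
              rcases le_or_gt a 2 with h | h
              · nlinarith [mul_nonneg (show (0:ℤ) ≤ 2 - a by omega) (show (0:ℤ) ≤ 3 - a by omega)]
              · nlinarith [mul_nonneg (show (0:ℤ) ≤ a - 2 by omega) (show (0:ℤ) ≤ a - 3 by omega)]
            have hT1 := two_T (a-1)
            have hx0' : 0 ≤ x - 2*a + 1 := by
              simp only [G, hmaxa'] at hx2
              nlinarith
            have hxu : x - 2*a + 1 ≤ G 0 (a-1) := by
              have hm : max (0:ℤ) (a-1) = a - 1 := max_eq_right (by omega)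
              simp only [G, hmaxa] at hxG
              simp only [G, hm]
              linarith
            obtain ⟨l, hl, hops, hfold⟩ := ih 0 (a-1) (x - 2*a + 1) le_rfl (by omega)
              (by omega) hx0' hxu
            refine ⟨Lp :: l, by simp [hl], ?_, ?_⟩
            · intro g hg
              rcases List.mem_cons.mp hg with rfl | hg
              · exact mem_ops_Lp
              · exact hops g hg
            · rw [List.foldr_cons, hfold]
              simp only [Lp, Prod.mk.injEq]
              constructor <;> ring



/-- Combined: upper bound from `ub` plus the sInf-membership decomposition. -/
lemma dpc_spec (x y a b : ℤ) (ha : 0 ≤ a) (hb : 0 ≤ b) (hx : 0 ≤ x)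
    (hxG : x ≤ G a b) (hy : y = x - a + b) :
    (dpc (0,0) (x,y) : ℤ) ≤ a + b ∧
    ∃ a' b' : ℤ, 0 ≤ a' ∧ 0 ≤ b' ∧ a' + b' = (dpc (0,0) (x,y) : ℤ) ∧
      x - y = a' - b' ∧ x ≤ G a' b' := by
  have hdef : dpc (0,0) (x,y) = sInf {n | ∃ l : List ((ℤ × ℤ) → (ℤ × ℤ)),
      l.length = n ∧ (∀ f ∈ l, f ∈ ops) ∧
      l.foldr (fun f p => f p) ((0,0) : ℤ × ℤ) = (x,y)} := rfl
  have hcast : ((a+b).toNat : ℤ) = a + b := Int.toNat_of_nonneg (add_nonneg ha hb)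
  obtain ⟨l, hlen, hops, hfold⟩ := ub (a+b).toNat a b x ha hb hcast.symm hx hxG
  have hmem : (a+b).toNat ∈ {n | ∃ l : List ((ℤ × ℤ) → (ℤ × ℤ)),
      l.length = n ∧ (∀ f ∈ l, f ∈ ops) ∧
      l.foldr (fun f p => f p) ((0,0) : ℤ × ℤ) = (x,y)} := by
    exact ⟨l, hlen, hops, by rw [hfold, hy]⟩
  have h1 : dpc (0,0) (x,y) ≤ (a+b).toNat := by
    rw [hdef]; exact Nat.sInf_le hmem
  constructor
  · calc (dpc (0,0) (x,y) : ℤ) ≤ ((a+b).toNat : ℤ) := by exact_mod_cast h1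
      _ = a + b := hcast
  · have hne : {n | ∃ l : List ((ℤ × ℤ) → (ℤ × ℤ)),
        l.length = n ∧ (∀ f ∈ l, f ∈ ops) ∧
        l.foldr (fun f p => f p) ((0,0) : ℤ × ℤ) = (x,y)}.Nonempty := ⟨_, hmem⟩
    obtain ⟨l', hlen', hops', hfold'⟩ := Nat.sInf_mem hne
    obtain ⟨a', b', ha', hb', hab', hu', hx'⟩ := lb l' hops'
    rw [hfold'] at hu' hx'
    refine ⟨a', b', ha', hb', ?_, hu', hx'⟩
    rw [hab', hlen', hdef]

end PCaux

open PCaux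
theorem nonneg_part_of_boundary_lines (r c k : ℤ) (hr : 2 ≤ r)
    (hpar : c % 2 = r % 2) (hle : |c| ≤ r - 2) (hk : |c| = r - 2 * k) :
    (0 ≤ c →
      {x : ℤ | 0 ≤ x ∧ (dpc (0, 0) (x, x + c) : ℤ) = r} =
        Set.Icc ((r - 1 - k) * (r - 2 - k) / 2 + k) ((r - k) * (r - k - 1) / 2 + k)) ∧
    (c < 0 →
      {x : ℤ | 0 ≤ x ∧ (dpc (0, 0) (x, x + c) : ℤ) = r} =
        Set.Icc ((r - k) * (r - k - 1) / 2 + 1) ((r - k + 1) * (r - k) / 2)) := by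
  constructor
  · -- case 0 ≤ c
    intro hc
    rw [abs_of_nonneg hc] at hk hle
    have hc' : c = r - 2 * k := by omega
    have hk1 : 1 ≤ k := by omega
    have hkm : k ≤ r - k := by omega
    have E1 : (r - 1 - k) * (r - 2 - k) / 2 = T (r - k - 1) := by
      rw [T]; congr 1; ring
    have E2 : (r - k) * (r - k - 1) / 2 = T (r - k) := by
      rw [T]
    have hT1 : 0 ≤ T (r - k - 1) := T_nonneg (by omega)
    ext x
    simp only [Set.mem_setOf_eq, Set.mem_Icc, E1, E2]
    constructor
    · rintro ⟨hx0, hd⟩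
      obtain ⟨hub, a', b', ha', hb', hab', hu', hx'⟩ :=
        dpc_spec x (x + c) (x + max 0 (-c)) (x + max 0 (-c) + c)
          (by positivity) (by omega) hx0
          (by
            have h0 : (0:ℤ) ≤ x + max 0 (-c) := by positivity
            have := T_nonneg (le_max_of_le_left h0 :
              (0:ℤ) ≤ max (x + max 0 (-c)) (x + max 0 (-c) + c))
            simp only [G]; omega)
          (by ring)
      constructor
      · -- lower endpoint: otherwise dpc ≤ r - 2
        by_contra hlt
        push_neg at hlt
        have hx2 : x ≤ G (k-1) (r-k-1) := by
          have hm : max (k-1) (r-k-1) = r-k-1 := max_eq_right (by omega)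
          simp only [G, hm]; omega
        have := (dpc_spec x (x + c) (k-1) (r-k-1) (by omega) (by omega) hx0 hx2
          (by omega)).1
        omega
      · -- upper endpoint from the decomposition at length r
        have ha'k : a' = k := by omega
        have hb'k : b' = r - k := by omega
        rw [ha'k, hb'k] at hx'
        have hm : max k (r-k) = r - k := max_eq_right hkm
        simp only [G, hm] at hx'
        omega
    · rintro ⟨hxl, hxr⟩
      have hx0 : 0 ≤ x := by omega
      have hx2 : x ≤ G k (r-k) := by
        have hm : max k (r-k) = r - k := max_eq_right hkm
        simp only [G, hm]; omega
      obtain ⟨hub, a', b', ha', hb', hab', hu', hx'⟩ :=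
        dpc_spec x (x + c) k (r-k) (by omega) (by omega) hx0 hx2 (by omega)
      refine ⟨hx0, ?_⟩
      -- dpc ≤ r from hub; suppose dpc ≤ r - 1, contradiction
      by_contra hne
      have hlt : (dpc (0,0) (x, x+c) : ℤ) ≤ r - 1 := by omega
      -- b' = a' + c, 2a' + c ≤ r - 1, so a' ≤ k - 1
      have ha'le : a' ≤ k - 1 := by omega
      have hm2 : max a' b' = b' := max_eq_right (by omega)
      simp only [G, hm2] at hx'
      have hTle : T b' ≤ T (r - k - 1) := T_mono (by omega) (by omega)
      omega
  · -- case c < 0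
    intro hc
    rw [abs_of_neg hc] at hk hle
    have hc' : c = 2 * k - r := by omega
    have hk1 : 1 ≤ k := by omega
    have hks : k ≤ r - k - 1 := by omega
    have E2 : (r - k) * (r - k - 1) / 2 = T (r - k) := by rw [T]
    have E3 : (r - k + 1) * (r - k) / 2 = T (r - k + 1) := by
      rw [T]; congr 1; ring
    have hTs : T (r - k + 1) = T (r - k) + (r - k) := by
      have h := T_succ (r - k)
      linarith
    have hT1 : 0 ≤ T (r - k) := T_nonneg (by omega)
    ext x
    simp only [Set.mem_setOf_eq, Set.mem_Icc, E2, E3]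
    constructor
    · rintro ⟨hx0, hd⟩
      obtain ⟨hub, a', b', ha', hb', hab', hu', hx'⟩ :=
        dpc_spec x (x + c) (x + max 0 (-c)) (x + max 0 (-c) + c)
          (by positivity) (by omega) hx0
          (by
            have h0 : (0:ℤ) ≤ x + max 0 (-c) := by positivity
            have := T_nonneg (le_max_of_le_left h0 :
              (0:ℤ) ≤ max (x + max 0 (-c)) (x + max 0 (-c) + c))
            simp only [G]; omega)
          (by ring)
      constructor
      · by_contra hlt
        push_neg at hlt
        have hx2 : x ≤ G (r-k-1) (k-1) := by
          have hm : max (r-k-1) (k-1) = r-k-1 := max_eq_left (by omega)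
          have hTs' : T (r - k) = T (r - k - 1) + (r - k - 1) := by
            have h := T_succ (r - k - 1)
            rw [sub_add_cancel] at h
            linarith
          simp only [G, hm]; omega
        have := (dpc_spec x (x + c) (r-k-1) (k-1) (by omega) (by omega) hx0 hx2
          (by omega)).1
        omega
      · have ha'k : a' = r - k := by omega
        have hb'k : b' = k := by omega
        rw [ha'k, hb'k] at hx'
        have hm : max (r-k) k = r - k := max_eq_left (by omega)
        simp only [G, hm] at hx'
        omega
    · rintro ⟨hxl, hxr⟩
      have hx0 : 0 ≤ x := by omega
      have hx2 : x ≤ G (r-k) k := by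
        have hm : max (r-k) k = r - k := max_eq_left (by omega)
        simp only [G, hm]; omega
      obtain ⟨hub, a', b', ha', hb', hab', hu', hx'⟩ :=
        dpc_spec x (x + c) (r-k) k (by omega) (by omega) hx0 hx2 (by omega)
      refine ⟨hx0, ?_⟩
      by_contra hne
      have hlt : (dpc (0,0) (x, x+c) : ℤ) ≤ r - 1 := by omega
      have hb'le : b' ≤ k - 1 := by omega
      have ha'le : a' ≤ r - k - 1 := by omega
      have hm2 : max a' b' = a' := max_eq_left (by omega)
      simp only [G, hm2] at hx'
      have hTa' : T (a' + 1) = T a' + a' := T_succ a'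
      have hTle : T (a' + 1) ≤ T (r - k) := T_mono (by omega) (by omega)
      omega
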